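/- arXiv:1307.0369 — 2 statements merged into one kernel-verified Lean document; each statement's English description precedes it below -/
import Mathlib

section
/- Let (R, m, k) be an artinian commutative noetherian local ring, and set ρ = len_R(R) · dim_k Hom_R(k, R). Then every semidualizing R-module C satisfies len_R(C) ≤ ρ. -/
/-!
STATEMENT 5: For an artinian commutative noetherian local ring (R, m, k) and
ρ = len_R(R) · dim_k Hom_R(k, R), every semidualizing R-module C satisfies
len_R(C) ≤ ρ.
-/

open CategoryTheory

/-- `Ext^i_R(M, N)` for `R`-modules `M`, `N`. -/
noncomputable def extMod (R : Type) [CommRing R] (M N : ModuleCat R) (i : ℕ) : ModuleCat R :=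
  ((Ext R (ModuleCat R) i).obj (Opposite.op M)).obj N

/-- A finitely generated `R`-module `C` is semidualizing if the homothety map
`R → Hom_R(C, C)` is bijective and `Ext^i_R(C, C) = 0` for all `i ≥ 1`. -/
def IsSemidualizing (R : Type) [CommRing R] (C : Type) [AddCommGroup C] [Module R C] :
    Prop :=
  Module.Finite R C ∧
    Function.Bijective (LinearMap.lsmul R C) ∧
    ∀ i : ℕ, 1 ≤ i → Subsingleton (extMod R (ModuleCat.of R C) (ModuleCat.of R C) i)

/-- The length of an `R`-module, encoded as the Krull dimension of its lattice of
submodules (for modules of finite length this is the usual Jordan–Hölder length). -/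
noncomputable def moduleLength (R : Type) [CommRing R] (M : Type) [AddCommGroup M]
    [Module R M] : WithBot ℕ∞ :=
  Order.krullDim (Submodule R M)

section Aux
open Order
lemma height_add_one_le {α : Type*} [Preorder α] {x y : α} (h : x < y) :
    Order.height x + 1 ≤ Order.height y := by
  rw [Order.height_eq_iSup_lt_height y]
  exact le_iSup₂ (f := fun z (_ : z < y) => Order.height z + 1) x h

lemma length_le_height_add_height {γ α β : Type*} [Preorder γ] [Preorder α] [Preorder β]
    (f : γ → α) (g : γ → β) (hf : Monotone f) (hg : Monotone g)
    (hstep : ∀ x y : γ, x < y → f x < f y ∨ g x < g y) (p : LTSeries γ) :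
    (p.length : ℕ∞) ≤ Order.height (f p.last) + Order.height (g p.last) := by
  obtain ⟨n, hn⟩ : ∃ n, p.length = n := ⟨_, rfl⟩
  rw [hn]
  induction n generalizing p with
  | zero => simp
  | succ n ih =>
    have hne : p.length ≠ 0 := by omega
    have hlt : p.eraseLast.last < p.last := p.eraseLast_last_rel_last hne
    have h1 : p.eraseLast.length = n := by
      simp [RelSeries.eraseLast, hn]
    have IH := ih p.eraseLast h1
    rcases hstep _ _ hlt with h | h
    · calc ((n : ℕ∞) + 1)
          ≤ (Order.height (f p.eraseLast.last) + Order.height (g p.eraseLast.last)) + 1 := by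
            exact add_le_add_left IH 1
        _ = (Order.height (f p.eraseLast.last) + 1) + Order.height (g p.eraseLast.last) := by
            ring
        _ ≤ Order.height (f p.last) + Order.height (g p.last) :=
            add_le_add (_root_.height_add_one_le h) (Order.height_mono (hg hlt.le))
    · calc ((n : ℕ∞) + 1)
          ≤ (Order.height (f p.eraseLast.last) + Order.height (g p.eraseLast.last)) + 1 := by
            exact add_le_add_left IH 1
        _ = Order.height (f p.eraseLast.last) + (Order.height (g p.eraseLast.last) + 1) := by
            ring
        _ ≤ Order.height (f p.last) + Order.height (g p.last) :=
            add_le_add (Order.height_mono (hf hlt.le)) (_root_.height_add_one_le h)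

lemma krullDim_le_add_of_strict {γ α β : Type*} [Preorder γ] [Preorder α] [Preorder β]
    (f : γ → α) (g : γ → β) (hf : Monotone f) (hg : Monotone g)
    (hstep : ∀ x y : γ, x < y → f x < f y ∨ g x < g y) :
    krullDim γ ≤ krullDim α + krullDim β := by
  cases isEmpty_or_nonempty γ with
  | inl h => rw [krullDim_eq_bot]; exact bot_le
  | inr h =>
    refine iSup_le fun p => ?_
    calc ((p.length : ℕ∞) : WithBot ℕ∞)
        ≤ ((Order.height (f p.last) + Order.height (g p.last) : ℕ∞) : WithBot ℕ∞) := by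
          exact_mod_cast length_le_height_add_height f g hf hg hstep p
      _ = (Order.height (f p.last) : WithBot ℕ∞) + (Order.height (g p.last) : WithBot ℕ∞) := by
          exact_mod_cast rfl
      _ ≤ krullDim α + krullDim β :=
          add_le_add (Order.height_le_krullDim _) (Order.height_le_krullDim _)
variable {R : Type} [CommRing R]

lemma moduleLength_le_of_surjective {M N : Type} [AddCommGroup M] [Module R M]
    [AddCommGroup N] [Module R N] (f : M →ₗ[R] N) (hf : Function.Surjective f) :
    moduleLength R N ≤ moduleLength R M := by
  refine krullDim_le_of_strictMono (Submodule.comap f) ?_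
  intro P Q h
  exact lt_of_le_of_ne (Submodule.comap_mono h.le) fun e => h.ne <| by
    rw [← Submodule.map_comap_eq_of_surjective hf P, e,
      Submodule.map_comap_eq_of_surjective hf Q]

lemma moduleLength_eq_of_equiv {M N : Type} [AddCommGroup M] [Module R M]
    [AddCommGroup N] [Module R N] (e : M ≃ₗ[R] N) :
    moduleLength R M = moduleLength R N :=
  krullDim_eq_of_orderIso (Submodule.orderIsoMapComap e)

lemma moduleLength_le_add (M : Type) [AddCommGroup M] [Module R M] (N : Submodule R M) :
    moduleLength R M ≤ moduleLength R N + moduleLength R (M ⧸ N) := by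
  refine krullDim_le_add_of_strict
    (fun P => Submodule.comap N.subtype P) (fun P => Submodule.map N.mkQ P)
    (fun _ _ h => Submodule.comap_mono h) (fun _ _ h => Submodule.map_mono h) ?_
  intro P Q h
  rcases (Submodule.comap_mono (f := N.subtype) h.le).lt_or_eq with h1 | h1
  · exact Or.inl h1
  rcases (Submodule.map_mono (f := N.mkQ) h.le).lt_or_eq with h2 | h2
  · exact Or.inr h2
  exfalso
  refine h.ne (le_antisymm h.le fun x hx => ?_)
  have hmx : N.mkQ x ∈ Submodule.map N.mkQ P := by rw [h2]; exact ⟨x, hx, rfl⟩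
  obtain ⟨y, hy, hxy⟩ := hmx
  have hsub : x - y ∈ N := by
    have : N.mkQ (x - y) = 0 := by
      rw [map_sub, hxy, sub_self]
    rwa [Submodule.mkQ_apply, Submodule.Quotient.mk_eq_zero] at this
  have hPQ : x - y ∈ Q := Q.sub_mem hx (h.le hy)
  have : (⟨x - y, hsub⟩ : N) ∈ Submodule.comap N.subtype P := by
    rw [h1]; exact hPQ
  have hxyP : x - y ∈ P := this
  simpa using P.add_mem hxyP hy

lemma moduleLength_le_span_card {x : ℕ∞} (hx : moduleLength R R ≤ (x : WithBot ℕ∞)) :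
    ∀ (n : ℕ) (M : Type) (_ : AddCommGroup M) (_ : Module R M) (s : Finset M),
      s.card ≤ n → Submodule.span R (s : Set M) = ⊤ →
      moduleLength R M ≤ (((n : ℕ∞) * x : ℕ∞) : WithBot ℕ∞) := by
  intro n
  induction n with
  | zero =>
    intro M _ _ s hcard hspan
    have hs : s = ∅ := Finset.card_eq_zero.mp (Nat.le_zero.mp hcard)
    rw [hs] at hspan
    simp only [Finset.coe_empty, Submodule.span_empty] at hspan
    have : Subsingleton (Submodule R M) := subsingleton_of_bot_eq_top hspan
    refine le_trans (krullDim_nonpos_of_subsingleton) ?_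
    simp
  | succ n ih =>
    intro M _ _ s hcard hspan
    classical
    rcases s.eq_empty_or_nonempty with hs | ⟨a, ha⟩
    · have := ih M ‹_› ‹_› s (by simp [hs]) hspan
      refine this.trans ?_
      rw [WithBot.coe_le_coe]
      exact mul_le_mul_left (by exact_mod_cast Nat.le_succ n) x
    · set N : Submodule R M := Submodule.span R {a} with hN
      -- length of N
      have hlenN : moduleLength R ↥N ≤ (x : WithBot ℕ∞) := by
        have : N = LinearMap.range (LinearMap.toSpanSingleton R M a) :=
          LinearMap.span_singleton_eq_range R M a
        rw [this]
        exact le_trans (moduleLength_le_of_surjective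
          (LinearMap.toSpanSingleton R M a).rangeRestrict
          (LinearMap.surjective_rangeRestrict _)) hx
      -- quotient generated by images of the rest
      have hspanQ : Submodule.span R ((s.erase a).image N.mkQ : Set (M ⧸ N)) = ⊤ := by
        have h1 : Submodule.map N.mkQ (Submodule.span R (s : Set M)) = ⊤ := by
          rw [hspan, Submodule.map_top, Submodule.range_mkQ]
        have h2 : (s : Set M) = insert a ((s.erase a) : Set M) := by
          rw [← Finset.coe_insert, Finset.insert_erase ha]
        rw [h2, Submodule.span_insert, Submodule.map_sup, Submodule.map_span,
          Submodule.map_span] at h1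
        have h3 : Submodule.span R (N.mkQ '' {a}) = ⊥ := by
          rw [Set.image_singleton, Submodule.span_singleton_eq_bot]
          rw [Submodule.mkQ_apply, Submodule.Quotient.mk_eq_zero]
          exact Submodule.mem_span_singleton_self a
        rw [h3, bot_sup_eq] at h1
        rw [Finset.coe_image]
        exact h1
      have hcardQ : ((s.erase a).image N.mkQ).card ≤ n := by
        calc ((s.erase a).image N.mkQ).card ≤ (s.erase a).card := Finset.card_image_le
          _ ≤ n := by
            have := Finset.card_erase_of_mem ha
            omega
      have hlenQ := ih (M ⧸ N) inferInstance inferInstance _ hcardQ hspanQ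
      calc moduleLength R M ≤ moduleLength R ↥N + moduleLength R (M ⧸ N) :=
            moduleLength_le_add M N
        _ ≤ (x : WithBot ℕ∞) + (((n : ℕ∞) * x : ℕ∞) : WithBot ℕ∞) := add_le_add hlenN hlenQ
        _ = ((((n : ℕ) + 1 : ℕ∞)) * x : ℕ∞) := by
            rw [← WithBot.coe_add]
            congr 1
            ring
        _ = ((((n + 1 : ℕ) : ℕ∞)) * x : ℕ∞) := by norm_cast

lemma le_moduleLength_pi (W : Type) [AddCommGroup W] [Module R W] [Nontrivial W] (d : ℕ) :
    (((d : ℕ∞)) : WithBot ℕ∞) ≤ moduleLength R (Fin d → W) := by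
  obtain ⟨w, hw⟩ := exists_ne (0 : W)
  set S : Fin (d + 1) → Submodule R (Fin d → W) :=
    fun i => Submodule.pi {j : Fin d | (i : ℕ) ≤ (j : ℕ)} (fun _ => ⊥) with hS
  have hmono : StrictMono S := by
    intro i i' hii'
    constructor
    · intro v hv j hj
      have hj' : (i : ℕ) ≤ (j : ℕ) := le_trans (le_of_lt (Fin.lt_iff_val_lt_val.mp hii')) hj
      exact hv j hj'
    · intro hle
      have hid : (i : ℕ) < d := lt_of_lt_of_le (Fin.lt_iff_val_lt_val.mp hii')
        (Nat.lt_succ_iff.mp i'.isLt)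
      set v : Fin d → W := Pi.single ⟨(i : ℕ), hid⟩ w with hv
      have hvS : v ∈ S i' := by
        intro j hj
        have : j ≠ ⟨(i : ℕ), hid⟩ := by
          intro h
          rw [h] at hj
          simp only [Set.mem_setOf_eq] at hj
          exact absurd (lt_of_lt_of_le (Fin.lt_iff_val_lt_val.mp hii') hj) (lt_irrefl _)
        simp [hv, Pi.single_eq_of_ne this]
      have hvSi : v ∈ S i := hle hvS
      have : v ⟨(i : ℕ), hid⟩ = 0 := hvSi _ (by simp)
      rw [hv, Pi.single_eq_same] at this
      exact hw this
  let p : LTSeries (Submodule R (Fin d → W)) :=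
    ⟨d, fun i => S i, fun i => hmono (by exact Fin.castSucc_lt_succ (i := i))⟩
  have := Order.LTSeries.length_le_krullDim p
  exact_mod_cast this

lemma nontrivial_hom_residueField (C : Type) [AddCommGroup C] [Module R C]
    [IsLocalRing R] [IsArtinianRing R] [IsNoetherianRing R] [Module.Finite R C]
    [Nontrivial C] :
    Nontrivial (IsLocalRing.ResidueField R →ₗ[R] C) := by
  haveI : IsArtinian R C := inferInstance
  haveI : IsNoetherian R C := inferInstance
  haveI : IsAtomic (Submodule R C) :=
    isAtomic_of_orderBot_wellFounded_lt ((isArtinian_iff R C).mp ‹_›)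
  obtain hbot | ⟨S, hS, -⟩ := IsAtomic.eq_bot_or_exists_atom_le (⊤ : Submodule R C)
  · exfalso
    obtain ⟨c, hc⟩ := exists_ne (0 : C)
    have : c ∈ (⊥ : Submodule R C) := hbot ▸ Submodule.mem_top
    exact hc (by simpa using this)
  have hsmul_le : IsLocalRing.maximalIdeal R • S ≤ S := Submodule.smul_le_right
  have hsmul_bot : IsLocalRing.maximalIdeal R • S = ⊥ := by
    rcases hsmul_le.lt_or_eq with hlt | heq
    · exact (hS.le_iff.mp hlt.le).resolve_right fun h => absurd h hlt.ne
    · exfalso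
      refine hS.1 (Submodule.eq_bot_of_le_smul_of_le_jacobson_bot
        (IsLocalRing.maximalIdeal R) S (IsNoetherian.noetherian S) heq.ge ?_)
      exact (IsLocalRing.jacobson_eq_maximalIdeal ⊥ bot_ne_top).ge
  obtain ⟨x, hxS, hx0⟩ := Submodule.exists_mem_ne_zero_of_ne_bot hS.1
  have hker : IsLocalRing.maximalIdeal R ≤ LinearMap.ker (LinearMap.toSpanSingleton R C x) := by
    intro a ha
    have : a • x ∈ IsLocalRing.maximalIdeal R • S := Submodule.smul_mem_smul ha hxS
    rw [hsmul_bot] at this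
    simpa [LinearMap.mem_ker, LinearMap.toSpanSingleton_apply] using this
  set f : IsLocalRing.ResidueField R →ₗ[R] C :=
    Submodule.liftQ (IsLocalRing.maximalIdeal R) (LinearMap.toSpanSingleton R C x) hker with hf
  have hfne : f ≠ 0 := by
    intro h
    have hx : f (Submodule.Quotient.mk (1 : R)) = x := by
      rw [hf]
      exact (Submodule.liftQ_apply _ _ _).trans (one_smul R x)
    rw [h] at hx
    change (0 : C) = x at hx
    exact hx0 hx.symm
  exact nontrivial_of_ne f 0 hfne

open TensorProduct in
theorem main_test
    (R : Type) [CommRing R] [IsNoetherianRing R] [IsLocalRing R] [IsArtinianRing R]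
    (C : Type) [AddCommGroup C] [Module R C]
    (hfin : Module.Finite R C) (hbij : Function.Bijective (LinearMap.lsmul R C)) :
    moduleLength R C ≤
      moduleLength R R * moduleLength R (IsLocalRing.ResidueField R →ₗ[R] R) := by
  classical
  haveI := hfin
  set k := IsLocalRing.ResidueField R with hk
  haveI : Nontrivial C := by
    by_contra h
    rw [not_nontrivial_iff_subsingleton] at h
    haveI := h
    exact zero_ne_one (hbij.injective (Subsingleton.elim _ _))
  haveI hW : Nontrivial (k →ₗ[R] C) := nontrivial_hom_residueField C
  set d := Module.finrank k (k ⊗[R] C) with hd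
  let b : Module.Basis (Fin d) k (k ⊗[R] C) := Module.finBasis k (k ⊗[R] C)
  have hsurj : Function.Surjective (TensorProduct.mk R k C 1) :=
    TensorProduct.mk_surjective R C k Ideal.Quotient.mk_surjective
  choose g hg using fun i => hsurj (b i)
  have hspan : Submodule.span R (Set.range g) = ⊤ :=
    IsLocalRing.span_eq_top_of_tmul_eq_basis g b fun i => hg i
  set s : Finset C := Finset.image g Finset.univ with hsdef
  have hs_span : Submodule.span R (s : Set C) = ⊤ := by
    rw [hsdef, Finset.coe_image, Finset.coe_univ, Set.image_univ]
    exact hspan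
  have hs_card : s.card ≤ d := le_trans Finset.card_image_le (by simp)
  -- length of R as a coe
  obtain ⟨a, ha⟩ : ∃ a : ℕ∞, moduleLength R R = (a : WithBot ℕ∞) := by
    have h0 : (0 : WithBot ℕ∞) ≤ moduleLength R R :=
      Order.krullDim_nonneg (α := Submodule R R)
    have hne : moduleLength R R ≠ ⊥ := by
      intro hbot
      rw [hbot] at h0
      exact absurd h0 (by simp)
    obtain ⟨a, ha⟩ := WithBot.ne_bot_iff_exists.mp hne
    exact ⟨a, ha.symm⟩
  -- the equivalence Hom(k, R) ≃ Fin d → Hom(k, C)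
  let e5 : (k ⊗[R] C) ≃ₗ[R] (Fin d → k) := (b.equivFun).restrictScalars R
  let E : (k →ₗ[R] R) ≃ₗ[R] (Fin d → (k →ₗ[R] C)) :=
    ((LinearEquiv.congrRight (LinearEquiv.ofBijective (LinearMap.lsmul R C) hbij)).trans
      (TensorProduct.lift.equiv (RingHom.id R) k C C)).trans
      ((LinearEquiv.arrowCongr e5 (LinearEquiv.refl R C)).trans
        (LinearMap.lsum R (fun _ : Fin d => k) R).symm)
  have hlenHom : moduleLength R (k →ₗ[R] R) = moduleLength R (Fin d → (k →ₗ[R] C)) :=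
    moduleLength_eq_of_equiv E
  have hdle : ((d : ℕ∞) : WithBot ℕ∞) ≤ moduleLength R (k →ₗ[R] R) := by
    rw [hlenHom]
    exact le_moduleLength_pi _ d
  obtain ⟨v, hv⟩ : ∃ v : ℕ∞, moduleLength R (k →ₗ[R] R) = (v : WithBot ℕ∞) := by
    have hne : moduleLength R (k →ₗ[R] R) ≠ ⊥ := by
      intro hbot
      rw [hbot] at hdle
      exact absurd hdle (by simp)
    obtain ⟨v, hv⟩ := WithBot.ne_bot_iff_exists.mp hne
    exact ⟨v, hv.symm⟩
  have hCa : moduleLength R C ≤ (((d : ℕ∞) * a : ℕ∞) : WithBot ℕ∞) :=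
    moduleLength_le_span_card ha.le d C _ _ s hs_card hs_span
  have hdv : (d : ℕ∞) ≤ v := by
    rw [hv] at hdle
    exact_mod_cast hdle
  rw [ha, hv]
  calc moduleLength R C ≤ (((d : ℕ∞) * a : ℕ∞) : WithBot ℕ∞) := hCa
    _ ≤ ((a * v : ℕ∞) : WithBot ℕ∞) := by
        rw [WithBot.coe_le_coe]
        calc (d : ℕ∞) * a = a * (d : ℕ∞) := mul_comm _ _
          _ ≤ a * v := mul_le_mul_right hdv a
    _ = (a : WithBot ℕ∞) * (v : WithBot ℕ∞) := by norm_cast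

end Aux

/-- Over an artinian local ring `(R, m, k)`, every semidualizing module `C` satisfies
`len_R(C) ≤ ρ := len_R(R) · dim_k Hom_R(k, R)`.  Note that `Hom_R(k, R)` is a
`k`-vector space, so its dimension over `k` equals its length over `R`. -/
theorem length_le_of_semidualizing
    (R : Type) [CommRing R] [IsNoetherianRing R] [IsLocalRing R] [IsArtinianRing R]
    (C : Type) [AddCommGroup C] [Module R C] (hC : IsSemidualizing R C) :
    moduleLength R C ≤
      moduleLength R R * moduleLength R (IsLocalRing.ResidueField R →ₗ[R] R) := by
  exact main_test R C hC.1 hC.2.1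
end

section
/- (Hilbert–Burch, converse direction) Let (R, m) be a commutative noetherian local ring and A an (n+1) × n matrix over R with grade(I_n(A)) ≥ 2. Then R/I_n(A) has a free resolution 0 → Rⁿ →A R^{n+1} →B R → 0, where B is the 1 × (n+1) matrix whose i-th entry is (−1)^{i−1} det(A_i). -/
/-!
STATEMENT 14 (Hilbert–Burch, converse direction): if A is an (n+1) × n matrix over a
commutative noetherian local ring with grade(I_n(A)) ≥ 2, then R/I_n(A) has a free
resolution 0 → Rⁿ →A R^{n+1} →B R → 0 where B_i = (−1)^{i−1} det(A_i).
-/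

open CategoryTheory

/-- `I_n(A)`: the ideal of `n × n` minors of an `(n+1) × n` matrix `A`; these are the
determinants of the matrices `A_i` obtained by deleting the `i`-th row of `A`. -/
noncomputable def minorsIdeal {R : Type} [CommRing R] {n : ℕ}
    (A : Matrix (Fin (n + 1)) (Fin n) R) : Ideal R :=
  Ideal.span (Set.range fun i : Fin (n + 1) => (A.submatrix i.succAbove id).det)

/-- The linear map `R^{n+1} → R` given by a row vector `b`. -/
noncomputable def rowMap {R : Type} [CommRing R] {n : ℕ} (b : Fin (n + 1) → R) :
    (Fin (n + 1) → R) →ₗ[R] R :=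
  ∑ i, b i • LinearMap.proj i

/-- `grade_R I ≥ 2`, via `grade_R I = min {i | Ext^i_R(R/I, R) ≠ 0}`. -/
def gradeGEtwo (R : Type) [CommRing R] (I : Ideal R) : Prop :=
  ∀ i : ℕ, i < 2 → Subsingleton (extMod R (ModuleCat.of R (R ⧸ I)) (ModuleCat.of R R) i)

open CategoryTheory Limits Projective

noncomputable section
universe v u
variable {C : Type u} [Category.{v} C] [Abelian C] [EnoughProjectives C]
variable {P Z : C} [Projective P] (p : P ⟶ Z) [Epi p]

set_option linter.unusedSectionVars false

/-- Auxiliary complex for a projective resolution starting from a chosen epi. -/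
def resComplex : ChainComplex C ℕ :=
  ChainComplex.mk' P (Projective.syzygies p) (Projective.d p)
    (fun f => ⟨_, Projective.d f, (Category.assoc _ _ _).trans ((congrArg (fun g => π (kernel f) ≫ g) (kernel.condition f)).trans comp_zero)⟩)

lemma resComplex_d_1_0 : (resComplex p).d 1 0 = d p := by
  simp [resComplex]

lemma resComplex_exactAt_succ (n : ℕ) :
    (resComplex p).ExactAt (n + 1) := by
  rw [HomologicalComplex.exactAt_iff' _ (n + 1 + 1) (n + 1) n (by simp) (by simp)]
  let g := (resComplex p).d (n + 1) n
  let α : (resComplex p).sc' (n + 1 + 1) (n + 1) n ⟶ ShortComplex.mk (d g) g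
      ((Category.assoc _ _ _).trans ((congrArg (fun h => π (kernel g) ≫ h) (kernel.condition g)).trans comp_zero)) :=
    { τ₁ := (ChainComplex.mk'XIso P (Projective.syzygies p) (Projective.d p) (fun f => ⟨_, Projective.d f, (Category.assoc _ _ _).trans ((congrArg (fun g => π (kernel f) ≫ g) (kernel.condition f)).trans comp_zero)⟩) n).hom
      τ₂ := 𝟙 _
      τ₃ := 𝟙 _
      comm₁₂ := by exact (ChainComplex.mk'_d P (Projective.syzygies p) (Projective.d p) (fun f => ⟨_, Projective.d f, (Category.assoc _ _ _).trans ((congrArg (fun g => π (kernel f) ≫ g) (kernel.condition f)).trans comp_zero)⟩) n).symm.trans (Category.comp_id _).symm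
      comm₂₃ := by exact (Category.id_comp _).trans (Category.comp_id _).symm }
  have : Epi α.τ₁ := @IsIso.epi_of_iso _ _ _ _ _ (Iso.isIso_hom (ChainComplex.mk'XIso P (Projective.syzygies p) (Projective.d p) (fun f => ⟨_, Projective.d f, (Category.assoc _ _ _).trans ((congrArg (fun g => π (kernel f) ≫ g) (kernel.condition f)).trans comp_zero)⟩) n))
  have : IsIso α.τ₂ := IsIso.id _
  have : Mono α.τ₃ := @IsIso.mono_of_iso _ _ _ _ _ (IsIso.id _)
  rw [ShortComplex.exact_iff_of_epi_of_isIso_of_mono α]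
  exact exact_d_f g

instance (n : ℕ) : Projective ((resComplex p).X n) := by
  obtain (_ | _ | _ | n) := n
  · exact (inferInstance : Projective P)
  all_goals apply Projective.projective_over

/-- A projective resolution starting from a chosen epi from a projective object. -/
def resOfEpi : ProjectiveResolution Z where
  complex := resComplex p
  π := (ChainComplex.toSingle₀Equiv _ _).symm ⟨p, by
          rw [resComplex_d_1_0]; exact (Category.assoc _ _ _).trans ((congrArg (fun g => π (kernel p) ≫ g) (kernel.condition p)).trans comp_zero)⟩
  quasiIso := ⟨fun n => by
    cases n
    · rw [ChainComplex.quasiIsoAt₀_iff, ShortComplex.quasiIso_iff_of_zeros']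
      · refine (ShortComplex.exact_and_epi_g_iff_of_iso ?_).2
          ⟨exact_d_f p, by dsimp; infer_instance⟩
        exact ShortComplex.isoMk (Iso.refl _) (Iso.refl _) (Iso.refl _)
          (by erw [Category.id_comp, Category.comp_id]; exact (resComplex_d_1_0 p).symm) (by erw [Category.id_comp, Category.comp_id]; exact (ChainComplex.toSingle₀Equiv_symm_apply_f_zero (C := resComplex p) p _).symm)
      all_goals rfl
    · rw [quasiIsoAt_iff_exactAt']
      · apply resComplex_exactAt_succ
      · apply ChainComplex.exactAt_succ_single_obj⟩

end

noncomputable section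
variable (R : Type) [CommRing R] (I : Ideal R)


instance : Projective (ModuleCat.of R R) :=
  ModuleCat.projective_of_free (Module.Basis.singleton PUnit.{1} R)

def pEpi : ModuleCat.of R R ⟶ ModuleCat.of R (R ⧸ I) := ModuleCat.ofHom I.mkQ

instance : Epi (pEpi R I) :=
  (ModuleCat.epi_iff_surjective _).2 (Submodule.mkQ_surjective I)

/-- Our chosen projective resolution of `R ⧸ I`. -/
def myRes : ProjectiveResolution (ModuleCat.of R (R ⧸ I)) := resOfEpi (pEpi R I)

lemma myRes_range_d10 :
    LinearMap.range (((myRes R I).complex.d 1 0).hom :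
      (myRes R I).complex.X 1 →ₗ[R] R) = I := by
  have hd : (myRes R I).complex.d 1 0 = d (pEpi R I) := resComplex_d_1_0 _
  apply le_antisymm
  · rintro x ⟨y, rfl⟩
    have h0 : d (pEpi R I) ≫ pEpi R I = 0 := by
      exact (Category.assoc _ _ _).trans ((congrArg (fun g => π (kernel (pEpi R I)) ≫ g) (kernel.condition (pEpi R I))).trans comp_zero)
    have : pEpi R I ((myRes R I).complex.d 1 0 y) = 0 := by
      rw [hd]
      exact congrArg (fun f => ModuleCat.Hom.hom f y) h0
    refine (Submodule.Quotient.mk_eq_zero I).1 ?_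
    exact this
  · intro x hx
    have hex := (exact_d_f (pEpi R I))
    rw [ShortComplex.moduleCat_exact_iff] at hex
    have hx0 : pEpi R I x = 0 := by
      exact (Submodule.Quotient.mk_eq_zero I).2 hx
    obtain ⟨y, hy⟩ := hex x hx0
    exact ⟨y, by rw [hd]; exact hy⟩

lemma exactAt_of_subsingleton (i : ℕ)
    (h : Subsingleton (extMod R (ModuleCat.of R (R ⧸ I)) (ModuleCat.of R R) i)) :
    ((myRes R I).complex.linearYonedaObj R (ModuleCat.of R R)).ExactAt i := by
  rw [HomologicalComplex.exactAt_iff_isZero_homology]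
  haveI : Subsingleton ((((Ext R (ModuleCat R) i).obj
      (Opposite.op (ModuleCat.of R (R ⧸ I)))).obj (ModuleCat.of R R))) := h
  exact IsZero.of_iso (ModuleCat.isZero_of_subsingleton _)
    ((myRes R I).isoExt i (ModuleCat.of R R)).symm

/-- From `Ext^0 = 0`: the annihilator of `I` is zero. -/
lemma ann_eq_zero
    (h : Subsingleton (extMod R (ModuleCat.of R (R ⧸ I)) (ModuleCat.of R R) 0))
    (r : R) (hr : ∀ a ∈ I, a * r = 0) : r = 0 := by
  have hex := exactAt_of_subsingleton R I 0 h
  rw [HomologicalComplex.exactAt_iff' _ 0 0 1 (by simp) (by simp)] at hex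
  rw [ShortComplex.moduleCat_exact_iff] at hex
  set K := (myRes R I).complex.linearYonedaObj R (ModuleCat.of R R) with hK
  -- the element φ : (myRes).complex.X 0 ⟶ R, i.e. R →ₗ[R] R, x ↦ x * r
  have hφmem : (K.sc' 0 0 1).g (ModuleCat.ofHom (LinearMap.toSpanSingleton R R r)) = 0 := by
    show K.d 0 1 (ModuleCat.ofHom (LinearMap.toSpanSingleton R R r)) = 0
    rw [ChainComplex.linearYonedaObj_d]
    show Linear.leftComp R (ModuleCat.of R R) ((myRes R I).complex.d 1 0)
      (ModuleCat.ofHom (LinearMap.toSpanSingleton R R r)) = 0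
    erw [Linear.leftComp_apply]
    apply ModuleCat.hom_ext
    apply LinearMap.ext
    intro u
    have hu : (myRes R I).complex.d 1 0 u ∈ I := (myRes_range_d10 R I).le ⟨u, rfl⟩
    have h2 := hr _ hu
    show LinearMap.toSpanSingleton R R r ((myRes R I).complex.d 1 0 u) = 0
    exact h2
  obtain ⟨χ, hχ⟩ := hex _ hφmem
  have hf0 : (K.sc' 0 0 1).f = 0 := by
    show K.d 0 0 = 0
    exact K.shape 0 0 (by simp)
  rw [hf0] at hχ
  have : ModuleCat.ofHom (LinearMap.toSpanSingleton R R r) = (0 : (myRes R I).complex.X 0 ⟶ ModuleCat.of R R) := by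
    rw [← hχ]; rfl
  have := congrArg (fun f => ModuleCat.Hom.hom f 1) this
  simp at this; exact this

/-- From `Ext^1 = 0`: every `R`-linear map `I → R` is multiplication by some `r`. -/
lemma hom_of_ideal_eq_smul
    (h : Subsingleton (extMod R (ModuleCat.of R (R ⧸ I)) (ModuleCat.of R R) 1))
    (f : (I : Submodule R R) →ₗ[R] R) :
    ∃ r : R, ∀ (a : R) (ha : a ∈ I), f ⟨a, ha⟩ = a * r := by
  have hex := exactAt_of_subsingleton R I 1 h
  rw [HomologicalComplex.exactAt_iff' _ 0 1 2 (by simp) (by simp)] at hex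
  rw [ShortComplex.moduleCat_exact_iff] at hex
  set K := (myRes R I).complex.linearYonedaObj R (ModuleCat.of R R) with hK
  have hmem : ∀ u, (((myRes R I).complex.d 1 0).hom : (myRes R I).complex.X 1 →ₗ[R] R) u ∈ I :=
    fun u => (myRes_range_d10 R I).le ⟨u, rfl⟩
  set ψ : (myRes R I).complex.X 1 →ₗ[R] R :=
    f.comp (LinearMap.codRestrict (I : Submodule R R) _ hmem) with hψ
  have hψ0 : (K.sc' 0 1 2).g (ModuleCat.ofHom ψ : (myRes R I).complex.X 1 ⟶ ModuleCat.of R R) = 0 := by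
    show K.d 1 2 (ModuleCat.ofHom ψ) = 0
    rw [ChainComplex.linearYonedaObj_d]
    show Linear.leftComp R (ModuleCat.of R R) ((myRes R I).complex.d 2 1) (ModuleCat.ofHom ψ) = 0
    erw [Linear.leftComp_apply]
    apply ModuleCat.hom_ext; apply LinearMap.ext; intro v
    show ψ ((myRes R I).complex.d 2 1 v) = 0
    have hz : ((myRes R I).complex.d 1 0) (((myRes R I).complex.d 2 1) v) = 0 := by
      have hdd := (myRes R I).complex.d_comp_d 2 1 0
      exact congrArg (fun g => ModuleCat.Hom.hom g v) hdd
    show f (LinearMap.codRestrict (I : Submodule R R) _ hmem ((myRes R I).complex.d 2 1 v)) = 0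
    have : LinearMap.codRestrict (I : Submodule R R) _ hmem ((myRes R I).complex.d 2 1 v) = 0 :=
      Subtype.ext hz
    rw [this, map_zero]
  obtain ⟨β₀, hβ⟩ := hex _ hψ0
  let β : ((myRes R I).complex.X 0 ⟶ ModuleCat.of R R) := β₀
  have hβ' : ((myRes R I).complex.d 1 0 ≫ β) = (ModuleCat.ofHom ψ : (myRes R I).complex.X 1 ⟶ ModuleCat.of R R) := by
    have h5 : (K.sc' 0 1 2).f β₀ = K.d 0 1 β₀ := rfl
    rw [h5, ChainComplex.linearYonedaObj_d] at hβ
    exact hβ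
  let βl : R →ₗ[R] R := β.hom
  refine ⟨βl (1 : R), ?_⟩
  intro a ha
  obtain ⟨u, hu⟩ := (myRes_range_d10 R I).ge ha
  have h1 : f ⟨a, ha⟩ = ψ u := by
    show f ⟨a, ha⟩ = f (LinearMap.codRestrict (I : Submodule R R) _ hmem u)
    congr 1
    exact Subtype.ext hu.symm
  have h2 : ψ u = βl (((myRes R I).complex.d 1 0) u) :=
    (congrArg (fun g => ModuleCat.Hom.hom g u) hβ').symm
  have h3 : βl (((myRes R I).complex.d 1 0) u) = βl a := by rw [hu]
  have h4 : βl a = a * βl (1 : R) := by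
    conv_lhs => rw [show a = a • (1 : R) by simp]
    rw [map_smul, smul_eq_mul]
  rw [h1, h2, h3]
  exact h4
end


section Matrices
variable {R : Type} [CommRing R] {n : ℕ} (A : Matrix (Fin (n + 1)) (Fin n) R)

/-- abbreviation for the minors -/
noncomputable def mnr (i : Fin (n + 1)) : R := (A.submatrix i.succAbove id).det

lemma rowMap_apply (b x : Fin (n + 1) → R) : rowMap b x = ∑ i, b i * x i := by
  simp [rowMap, LinearMap.sum_apply, smul_eq_mul]

/-- The bordered matrix `[x | A]`. -/
noncomputable def brd (x : Fin (n + 1) → R) : Matrix (Fin (n + 1)) (Fin (n + 1)) R :=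
  Matrix.of fun i k => Fin.cases (x i) (fun s => A i s) k

lemma brd_zero (x : Fin (n + 1) → R) (i : Fin (n + 1)) : brd A x i 0 = x i := rfl

lemma brd_succ (x : Fin (n + 1) → R) (i : Fin (n + 1)) (s : Fin n) :
    brd A x i s.succ = A i s := rfl

lemma brd_submatrix (x : Fin (n + 1) → R) (i : Fin (n + 1)) :
    (brd A x).submatrix i.succAbove Fin.succ = A.submatrix i.succAbove id := by
  ext r s
  simp [brd, Matrix.submatrix_apply]

lemma det_brd (x : Fin (n + 1) → R) :
    (brd A x).det = ∑ i : Fin (n + 1), (-1) ^ (i : ℕ) * x i * mnr A i := by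
  rw [Matrix.det_succ_column_zero]
  refine Finset.sum_congr rfl fun i _ => ?_
  rw [brd_zero, brd_submatrix]
  rfl

lemma adj_brd_zero (x : Fin (n + 1) → R) (j : Fin (n + 1)) :
    (brd A x).adjugate 0 j = (-1) ^ (j : ℕ) * mnr A j := by
  rw [Matrix.adjugate_apply, Matrix.det_succ_row _ j]
  rw [Finset.sum_eq_single (0 : Fin (n + 1))]
  · have h2 : ((brd A x).updateRow j (Pi.single (0 : Fin (n+1)) (1:R))).submatrix j.succAbove
        ((0 : Fin (n + 1)).succAbove) = A.submatrix j.succAbove id := by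
      ext r s
      rw [Matrix.submatrix_apply, Matrix.updateRow_ne (Fin.succAbove_ne j r)]
      rw [Fin.succAbove_zero]
      exact brd_succ A x _ s
    rw [h2]
    simp [mnr]
  · intro k _ hk
    have h3 : ((brd A x).updateRow j (Pi.single (0 : Fin (n+1)) (1:R))) j k = 0 := by
      rw [Matrix.updateRow_self]
      exact Pi.single_eq_of_ne hk 1
    rw [h3, mul_zero, zero_mul]
  · intro h; exact absurd (Finset.mem_univ _) h

lemma brd_mulVec (x : Fin (n + 1) → R) (v : Fin (n + 1) → R) :
    (brd A x).mulVec v = v 0 • x + A.mulVec (v ∘ Fin.succ) := by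
  funext i
  simp only [Matrix.mulVec, dotProduct, Pi.add_apply, Pi.smul_apply, smul_eq_mul]
  rw [Fin.sum_univ_succ]
  simp [brd_zero, brd_succ, mul_comm]


/-- The row vector `B`. -/
noncomputable def bvec : Fin (n + 1) → R := fun i => (-1) ^ (i : ℕ) * mnr A i

lemma rowMap_comp_mulVec (c : Fin n → R) : rowMap (bvec A) (A.mulVec c) = 0 := by
  rw [rowMap_apply]
  have key : ∀ j : Fin n, ∑ i : Fin (n + 1), bvec A i * A i j = 0 := by
    intro j
    have h0 : (brd A (fun i => A i j)).det = 0 := by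
      apply Matrix.det_zero_of_column_eq (i := 0) (j := j.succ) (Fin.succ_ne_zero j).symm
      intro k
      rfl
    rw [det_brd] at h0
    rw [← h0]
    refine Finset.sum_congr rfl fun i _ => ?_
    rw [bvec]; ring
  calc ∑ i : Fin (n + 1), bvec A i * A.mulVec c i
      = ∑ i : Fin (n + 1), ∑ j : Fin n, bvec A i * (A i j * c j) := by
        refine Finset.sum_congr rfl fun i _ => ?_
        rw [Matrix.mulVec, dotProduct, Finset.mul_sum]
    _ = ∑ j : Fin n, (∑ i : Fin (n + 1), bvec A i * A i j) * c j := by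
        rw [Finset.sum_comm]
        refine Finset.sum_congr rfl fun j _ => ?_
        rw [Finset.sum_mul]
        refine Finset.sum_congr rfl fun i _ => by ring
    _ = 0 := by simp [key]

lemma minor_smul_eq_zero_of_mulVec_eq_zero {v : Fin n → R} (hv : A.mulVec v = 0)
    (i : Fin (n + 1)) : mnr A i • v = 0 := by
  have h1 : (A.submatrix i.succAbove id).mulVec v = 0 := by
    funext k
    have := congrFun hv (i.succAbove k)
    simpa [Matrix.mulVec, dotProduct, Matrix.submatrix_apply] using this
  calc mnr A i • v = ((A.submatrix i.succAbove id).det • (1 : Matrix (Fin n) (Fin n) R)).mulVec v := by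
        rw [Matrix.smul_mulVec, Matrix.one_mulVec]; rfl
    _ = ((A.submatrix i.succAbove id).adjugate * (A.submatrix i.succAbove id)).mulVec v := by
        rw [Matrix.adjugate_mul]
    _ = (A.submatrix i.succAbove id).adjugate.mulVec ((A.submatrix i.succAbove id).mulVec v) := by
        rw [Matrix.mulVec_mulVec]
    _ = 0 := by rw [h1, Matrix.mulVec_zero]

lemma minor_smul_mem_range {x : Fin (n + 1) → R} (hx : rowMap (bvec A) x = 0)
    (j : Fin (n + 1)) : mnr A j • x ∈ LinearMap.range (Matrix.mulVecLin A) := by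
  have hdet : (brd A x).det = 0 := by
    rw [det_brd, ← hx, rowMap_apply]
    refine Finset.sum_congr rfl fun i _ => ?_
    rw [bvec]; ring
  set v : Fin (n + 1) → R := fun k => (brd A x).adjugate k j with hv
  have hMv : (brd A x).mulVec v = 0 := by
    funext i
    have : (brd A x).mulVec v i = ((brd A x) * (brd A x).adjugate) i j := by
      simp [Matrix.mulVec, dotProduct, Matrix.mul_apply, hv]
    rw [this, Matrix.mul_adjugate, hdet, zero_smul]
    rfl
  rw [brd_mulVec] at hMv
  have hv0 : v 0 = (-1) ^ (j : ℕ) * mnr A j := adj_brd_zero A x j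
  have key : ((-1) ^ (j : ℕ) * mnr A j) • x = A.mulVec (-(v ∘ Fin.succ)) := by
    rw [← hv0, Matrix.mulVec_neg]
    exact eq_neg_of_add_eq_zero_left hMv
  have h6 : mnr A j • x = A.mulVec ((-1 : R) ^ (j : ℕ) • (-(v ∘ Fin.succ))) := by
    rw [Matrix.mulVec_smul, ← key, smul_smul, ← mul_assoc, ← pow_add,
      Even.neg_one_pow ⟨(j : ℕ), rfl⟩, one_mul]
  rw [h6]
  exact ⟨_, rfl⟩

end Matrices

section MainProof
variable {R : Type} [CommRing R] {n : ℕ} (A : Matrix (Fin (n + 1)) (Fin n) R)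

lemma range_rowMap_eq : LinearMap.range (rowMap (bvec A)) = minorsIdeal A := by
  apply le_antisymm
  · rintro y ⟨x, rfl⟩
    rw [rowMap_apply]
    apply Ideal.sum_mem
    intro i _
    have h1 : mnr A i ∈ minorsIdeal A := Ideal.subset_span ⟨i, rfl⟩
    have h2 : bvec A i ∈ minorsIdeal A := Ideal.mul_mem_left _ _ h1
    exact Ideal.mul_mem_right _ _ h2
  · rw [minorsIdeal, Ideal.span_le]
    rintro y ⟨i, rfl⟩
    refine ⟨Pi.single i ((-1 : R) ^ (i : ℕ)), ?_⟩
    rw [rowMap_apply, Finset.sum_eq_single i]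
    · rw [Pi.single_eq_same]
      show ((-1 : R) ^ (i : ℕ) * mnr A i) * (-1 : R) ^ (i : ℕ) = mnr A i
      have hsq : (-1 : R) ^ (i : ℕ) * (-1 : R) ^ (i : ℕ) = 1 := by
        rw [← pow_add]; exact Even.neg_one_pow ⟨(i : ℕ), rfl⟩
      calc ((-1 : R) ^ (i : ℕ) * mnr A i) * (-1 : R) ^ (i : ℕ)
          = ((-1 : R) ^ (i : ℕ) * (-1 : R) ^ (i : ℕ)) * mnr A i := by ring
        _ = mnr A i := by rw [hsq, one_mul]
    · intro k _ hk
      rw [Pi.single_eq_of_ne hk, mul_zero]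
    · intro h; exact absurd (Finset.mem_univ _) h

end MainProof

theorem hilbert_burch_converse
    (R : Type) [CommRing R] [IsNoetherianRing R] [IsLocalRing R]
    {n : ℕ} (A : Matrix (Fin (n + 1)) (Fin n) R)
    (hgrade : gradeGEtwo R (minorsIdeal A)) :
    -- 0 → Rⁿ →A R^{n+1} →B R → 0 is a free resolution of R/I_n(A), where the i-th
    -- entry of B is (−1)^{i−1}·det(A_i) (one-based indexing; here i is zero-based)
    Function.Injective (Matrix.mulVecLin A) ∧
      LinearMap.range (Matrix.mulVecLin A) =
        LinearMap.ker (rowMap fun i => (-1 : R) ^ (i : ℕ) *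
          (A.submatrix i.succAbove id).det) ∧
      LinearMap.range (rowMap fun i => (-1 : R) ^ (i : ℕ) *
          (A.submatrix i.succAbove id).det) = minorsIdeal A  := by
  classical
  have h0 := hgrade 0 (by norm_num)
  have h1 := hgrade 1 (by norm_num)
  set I : Ideal R := minorsIdeal A with hI
  have annI : ∀ r : R, (∀ a ∈ I, a * r = 0) → r = 0 := fun r hr => ann_eq_zero R I h0 r hr
  have homI := hom_of_ideal_eq_smul R I h1
  -- injectivity
  have hker : ∀ v : Fin n → R, A.mulVec v = 0 → v = 0 := by
    intro v hv
    have hsm : ∀ a ∈ I, a • v = 0 := by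
      intro a ha
      induction ha using Submodule.span_induction with
      | mem z hz =>
          obtain ⟨i, rfl⟩ := hz
          exact minor_smul_eq_zero_of_mulVec_eq_zero A hv i
      | zero => rw [zero_smul]
      | add a b _ _ ha' hb' => rw [add_smul, ha', hb', add_zero]
      | smul r a _ ha' => rw [smul_eq_mul, mul_smul, ha', smul_zero]
    funext k
    refine annI (v k) fun a ha => ?_
    have := congrFun (hsm a ha) k
    simpa using this
  have hinj : Function.Injective (Matrix.mulVecLin A) := by
    intro v w hvw
    have h2 : A.mulVec (v - w) = 0 := by
      have h3 : Matrix.mulVecLin A (v - w) = 0 := by rw [map_sub, hvw, sub_self]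
      simpa [Matrix.mulVecLin_apply] using h3
    exact sub_eq_zero.1 (hker _ h2)
  refine ⟨hinj, ?_, range_rowMap_eq A⟩
  -- range A = ker B
  apply le_antisymm
  · rintro y ⟨c, rfl⟩
    simp only [LinearMap.mem_ker, Matrix.mulVecLin_apply]
    exact rowMap_comp_mulVec A c
  · intro x hx
    rw [LinearMap.mem_ker] at hx
    have hIx : ∀ a ∈ I, a • x ∈ LinearMap.range (Matrix.mulVecLin A) := by
      intro a ha
      induction ha using Submodule.span_induction with
      | mem z hz =>
          obtain ⟨j, rfl⟩ := hz
          exact minor_smul_mem_range A hx j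
      | zero => rw [zero_smul]; exact Submodule.zero_mem _
      | add a b _ _ ha' hb' => rw [add_smul]; exact Submodule.add_mem _ ha' hb'
      | smul r a _ ha' => rw [smul_eq_mul, mul_smul]; exact Submodule.smul_mem _ _ ha'
    set L := Matrix.mulVecLin A with hL
    set Lr := LinearMap.range L with hLr
    let e : (Fin n → R) ≃ₗ[R] Lr := LinearEquiv.ofInjective L hinj
    let Φ : (I : Submodule R R) →ₗ[R] (Fin n → R) :=
      e.symm.toLinearMap ∘ₗ LinearMap.codRestrict Lr
        ((LinearMap.toSpanSingleton R _ x) ∘ₗ (Submodule.subtype (I : Submodule R R)))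
        (fun a => hIx a.1 a.2)
    have hΦ : ∀ a : (I : Submodule R R), L (Φ a) = (a : R) • x := by
      intro a
      have h4 : e (Φ a) = ⟨(a : R) • x, hIx a.1 a.2⟩ := by
        show e (e.symm _) = _
        rw [LinearEquiv.apply_symm_apply]
        rfl
      have h5 := congrArg (Subtype.val) h4
      rwa [LinearEquiv.ofInjective_apply] at h5
    let y : Fin n → R := fun k =>
      Classical.choose (homI ((LinearMap.proj k) ∘ₗ Φ))
    have hy : ∀ (k : Fin n) (a : R) (ha : a ∈ I), Φ ⟨a, ha⟩ k = a * y k := fun k =>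
      Classical.choose_spec (homI ((LinearMap.proj k) ∘ₗ Φ))
    have hxy : ∀ a ∈ I, a • (x - L y) = 0 := by
      intro a ha
      have h6 : Φ ⟨a, ha⟩ = a • y := by
        funext k
        rw [hy k a ha]
        simp [smul_eq_mul]
      have h7 : L (a • y) = a • x := by rw [← h6, hΦ ⟨a, ha⟩]
      rw [smul_sub, ← map_smul, h7, sub_self]
    have h8 : x - L y = 0 := by
      funext k
      refine annI _ fun a ha => ?_
      have := congrFun (hxy a ha) k
      simpa using this
    exact ⟨y, (sub_eq_zero.1 h8).symm⟩
end
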